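/- (Weighted Turán bound for K₄-free graphs without 2/3-heavy triangles.) For every ε > 0 there exists n₀ such that the following holds for all n ≥ n₀. Let G be a K₄-free graph on n vertices with a weight function w : E(G) → [0,1], and suppose that G contains no triangle all three of whose edges have weight strictly greater than 2/3. Then Σ_{e ∈ E(G)} w(e) ≤ (3/10 + ε)·n². -/

import Mathlib

open Finset

/-- The edge set of a graph on a finite vertex type, as a `Finset`. -/
noncomputable def edgeFinset' {V : Type*} [Fintype V] (G : SimpleGraph V) : Finset (Sym2 V) :=
  by classical exact G.edgeFinset

attribute [local instance] Classical.propDecidable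

namespace WT

variable {n : ℕ}
attribute [local instance] Classical.propDecidable





/-- double sum of adjacency indicators over P × Q -/
noncomputable def SB (G : SimpleGraph (Fin n)) (P Q : Finset (Fin n)) : ℕ :=
  ∑ x ∈ P, ∑ y ∈ Q, if G.Adj x y then 1 else 0

/-- ordered-pair edge count: AA G = 2 e(G) -/
noncomputable def AA (G : SimpleGraph (Fin n)) : ℕ := SB G univ univ

/-- degree as a sum of indicators -/
noncomputable def dA (G : SimpleGraph (Fin n)) (x : Fin n) : ℕ :=
  ∑ y, if G.Adj x y then 1 else 0

lemma AA_eq_sum_dA (G : SimpleGraph (Fin n)) : AA G = ∑ x, dA G x := rfl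

lemma dA_le (G : SimpleGraph (Fin n)) (x : Fin n) : dA G x ≤ n := by
  calc dA G x ≤ ∑ _y : Fin n, 1 := Finset.sum_le_sum (fun y _ => by split <;> omega)
  _ = n := by simp

lemma AA_le (G : SimpleGraph (Fin n)) : AA G ≤ n^2 := by
  calc AA G = ∑ x, dA G x := rfl
  _ ≤ ∑ _x : Fin n, n := Finset.sum_le_sum (fun x _ => dA_le G x)
  _ = n^2 := by simp [sq]

lemma dA_comm_col (G : SimpleGraph (Fin n)) (v : Fin n) :
    (∑ x, if G.Adj x v then 1 else 0) = dA G v := by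
  unfold dA
  exact Finset.sum_congr rfl (fun x _ => by rw [G.adj_comm])

/-- replace `u` by a twin of `v` -/
def swapG (G : SimpleGraph (Fin n)) (u v : Fin n) : SimpleGraph (Fin n) where
  Adj x y := x ≠ y ∧ G.Adj (if x = u then v else x) (if y = u then v else y)
  symm := ⟨fun x y h => ⟨h.1.symm, h.2.symm⟩⟩
  loopless := ⟨fun x h => h.1 rfl⟩

lemma swapG_adj_left (G : SimpleGraph (Fin n)) {u v : Fin n} (huv : ¬ G.Adj u v) (y : Fin n) :
    (swapG G u v).Adj u y ↔ G.Adj v y := by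
  by_cases hy : y = u
  · subst hy
    simp only [swapG, if_pos rfl]
    constructor
    · rintro ⟨h, -⟩; exact absurd rfl h
    · intro h; exact absurd h.symm huv
  · simp only [swapG, if_pos rfl, if_neg hy]
    constructor
    · exact fun h => h.2
    · intro h; exact ⟨fun he => hy he.symm, h⟩

lemma swapG_adj_other (G : SimpleGraph (Fin n)) {u v x y : Fin n} (hx : x ≠ u) (hy : y ≠ u) :
    (swapG G u v).Adj x y ↔ G.Adj x y := by
  simp only [swapG, if_neg hx, if_neg hy]
  constructor
  · exact fun h => h.2
  · intro h; exact ⟨G.ne_of_adj h, h⟩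

lemma swapG_adj_col (G : SimpleGraph (Fin n)) {u v x : Fin n} (hx : x ≠ u) :
    (swapG G u v).Adj x u ↔ G.Adj x v := by
  simp only [swapG, if_neg hx, if_pos rfl]
  constructor
  · exact fun h => h.2
  · intro h
    refine ⟨hx, ?_⟩
    · exact h

lemma swapG_le {G H : SimpleGraph (Fin n)} (hHG : ∀ ⦃x y⦄, H.Adj x y → G.Adj x y)
    (u v : Fin n) : ∀ ⦃x y⦄, (swapG H u v).Adj x y → (swapG G u v).Adj x y := by
  rintro x y ⟨h1, h2⟩; exact ⟨h1, hHG h2⟩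

lemma swapG_cliqueFree {G : SimpleGraph (Fin n)} {k : ℕ} (hG : G.CliqueFree k)
    (u v : Fin n) : (swapG G u v).CliqueFree k := by
  intro S hS
  set σ : Fin n → Fin n := fun x => if x = u then v else x with hσ
  have hinj : Set.InjOn σ S := by
    intro a ha b hb hab
    by_contra hne
    have hadj : (swapG G u v).Adj a b := hS.1 (by simpa using ha) (by simpa using hb) hne
    have := hadj.2
    rw [show (if a = u then v else a) = σ a from rfl, show (if b = u then v else b) = σ b from rfl,
      hab] at this
    exact G.loopless.irrefl _ this
  apply hG (S.image σ)
  constructor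
  · rintro a ha b hb hab
    simp only [coe_image, Set.mem_image, mem_coe] at ha hb
    obtain ⟨x, hx, rfl⟩ := ha
    obtain ⟨y, hy, rfl⟩ := hb
    have hxy : x ≠ y := fun h => hab (by rw [h])
    exact (hS.1 (by simpa using hx) (by simpa using hy) hxy).2
  · rw [Finset.card_image_of_injOn hinj, hS.2]


lemma dA_swap_other (G : SimpleGraph (Fin n)) {u v x : Fin n} (hx : x ≠ u) :
    dA (swapG G u v) x + (if G.Adj x u then 1 else 0)
      = dA G x + (if G.Adj x v then 1 else 0) := by
  have hsplit : ∀ (K : SimpleGraph (Fin n)),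
      dA K x = (∑ y ∈ univ.erase u, if K.Adj x y then 1 else 0) + (if K.Adj x u then 1 else 0) := by
    intro K
    rw [dA, ← Finset.add_sum_erase _ _ (mem_univ u), add_comm]
  have h1 : (∑ y ∈ univ.erase u, if (swapG G u v).Adj x y then 1 else 0)
      = ∑ y ∈ univ.erase u, if G.Adj x y then 1 else 0 := by
    apply Finset.sum_congr rfl
    intro y hy
    rw [swapG_adj_other G hx (Finset.ne_of_mem_erase hy)]
  have h2 : (if (swapG G u v).Adj x u then 1 else 0) = (if G.Adj x v then 1 else 0) := by
    rw [swapG_adj_col G hx]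
  rw [hsplit (swapG G u v), hsplit G, h1, h2]
  omega

lemma dA_swap_row (G : SimpleGraph (Fin n)) {u v : Fin n} (huv : ¬ G.Adj u v) :
    dA (swapG G u v) u = dA G v := by
  unfold dA
  exact Finset.sum_congr rfl (fun y _ => by rw [swapG_adj_left G huv])

lemma AA_swap (G : SimpleGraph (Fin n)) {u v : Fin n} (huv : ¬ G.Adj u v) :
    AA (swapG G u v) + 2 * dA G u = AA G + 2 * dA G v := by
  have e1 : AA (swapG G u v) = dA (swapG G u v) u + ∑ x ∈ univ.erase u, dA (swapG G u v) x := by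
    rw [AA_eq_sum_dA, ← Finset.add_sum_erase _ _ (mem_univ u)]
  have e2 : AA G = dA G u + ∑ x ∈ univ.erase u, dA G x := by
    rw [AA_eq_sum_dA, ← Finset.add_sum_erase _ _ (mem_univ u)]
  have e3 : (∑ x ∈ univ.erase u, dA (swapG G u v) x) + (∑ x ∈ univ.erase u, (if G.Adj x u then 1 else 0))
      = (∑ x ∈ univ.erase u, dA G x) + (∑ x ∈ univ.erase u, (if G.Adj x v then 1 else 0)) := by
    rw [← Finset.sum_add_distrib, ← Finset.sum_add_distrib]
    exact Finset.sum_congr rfl (fun x hx => dA_swap_other G (Finset.ne_of_mem_erase hx))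
  have e4 : (∑ x ∈ univ.erase u, (if G.Adj x u then 1 else 0)) = dA G u := by
    have : (∑ x, if G.Adj x u then 1 else 0)
        = (∑ x ∈ univ.erase u, (if G.Adj x u then 1 else 0)) + (if G.Adj u u then 1 else 0) := by
      rw [← Finset.add_sum_erase _ _ (mem_univ u), add_comm]
    rw [dA_comm_col] at this
    simpa [G.loopless.irrefl u] using this.symm
  have e5 : (∑ x ∈ univ.erase u, (if G.Adj x v then 1 else 0)) = dA G v := by
    have : (∑ x, if G.Adj x v then 1 else 0)
        = (∑ x ∈ univ.erase u, (if G.Adj x v then 1 else 0)) + (if G.Adj u v then 1 else 0) := by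
      rw [← Finset.add_sum_erase _ _ (mem_univ u), add_comm]
    rw [dA_comm_col] at this
    simpa [huv] using this.symm
  have e6 : dA (swapG G u v) u = dA G v := dA_swap_row G huv
  omega

/-- the local objective -/
noncomputable def gg (G H : SimpleGraph (Fin n)) (x : Fin n) : ℕ := 2 * dA G x + dA H x

lemma F_swap (G H : SimpleGraph (Fin n)) (hHG : ∀ ⦃x y⦄, H.Adj x y → G.Adj x y)
    {u v : Fin n} (huv : ¬ G.Adj u v) :
    (2 * AA (swapG G u v) + AA (swapG H u v)) + 2 * gg G H u
      = (2 * AA G + AA H) + 2 * gg G H v := by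
  have hH : ¬ H.Adj u v := fun h => huv (hHG h)
  have h1 := AA_swap G huv
  have h2 := AA_swap H hH
  unfold gg
  omega

lemma SB_comm (G : SimpleGraph (Fin n)) (P Q : Finset (Fin n)) : SB G P Q = SB G Q P := by
  rw [SB, Finset.sum_comm]
  exact Finset.sum_congr rfl (fun x _ => Finset.sum_congr rfl (fun y _ => by rw [G.adj_comm]))

lemma SB_le (G : SimpleGraph (Fin n)) (P Q : Finset (Fin n)) : SB G P Q ≤ P.card * Q.card := by
  calc SB G P Q ≤ ∑ _x ∈ P, ∑ _y ∈ Q, 1 :=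
        Finset.sum_le_sum (fun x _ => Finset.sum_le_sum (fun y _ => by split <;> omega))
  _ = P.card * Q.card := by simp [mul_comm]

lemma SB_union_left (G : SimpleGraph (Fin n)) {P Q : Finset (Fin n)} (h : Disjoint P Q)
    (R : Finset (Fin n)) : SB G (P ∪ Q) R = SB G P R + SB G Q R :=
  Finset.sum_union h

lemma SB_union_right (G : SimpleGraph (Fin n)) (R : Finset (Fin n)) {P Q : Finset (Fin n)}
    (h : Disjoint P Q) : SB G R (P ∪ Q) = SB G R P + SB G R Q := by
  simp only [SB]
  rw [← Finset.sum_add_distrib]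
  exact Finset.sum_congr rfl (fun x _ => Finset.sum_union h)

/-- independent set gives zero block -/
lemma SB_diag_zero {G : SimpleGraph (Fin n)} {P : Finset (Fin n)}
    (h : ∀ a ∈ P, ∀ b ∈ P, ¬ G.Adj a b) : SB G P P = 0 := by
  apply Finset.sum_eq_zero
  intro x hx
  apply Finset.sum_eq_zero
  intro y hy
  exact if_neg (h x hx y hy)

/-- Bollobás–Erdős–Szemerédi style bound for triangle-free graphs on tripartitions -/
lemma BES (H : SimpleGraph (Fin n)) (hH3 : H.CliqueFree 3) (P1 P2 P3 : Finset (Fin n))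
    (h1 : P1.card ≤ P3.card) (h2 : P2.card ≤ P3.card) :
    SB H P1 P2 + SB H P1 P3 + SB H P2 P3 ≤ (P1.card + P2.card) * P3.card := by
  set c := P3.card with hc
  set D3 : Fin n → ℕ := fun x => ∑ b ∈ P3, if H.Adj x b then 1 else 0 with hD3
  have hD3le : ∀ x, D3 x ≤ c := by
    intro x
    calc D3 x ≤ ∑ _b ∈ P3, 1 := Finset.sum_le_sum (fun b _ => by split <;> omega)
    _ = c := by simp [hc]
  have hkey : ∀ u v, H.Adj u v → D3 u + D3 v ≤ c := by
    intro u v huv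
    have hfil : ∀ x, D3 x = (P3.filter (fun b => H.Adj x b)).card := by
      intro x; rw [Finset.card_filter]
    have hdisj : Disjoint (P3.filter (fun b => H.Adj u b)) (P3.filter (fun b => H.Adj v b)) := by
      rw [Finset.disjoint_left]
      intro b hb1 hb2
      have hub := (Finset.mem_filter.mp hb1).2
      have hvb := (Finset.mem_filter.mp hb2).2
      exact hH3 {u, v, b} (SimpleGraph.is3Clique_triple_iff.mpr ⟨huv, hub, hvb⟩)
    calc D3 u + D3 v
        = (P3.filter (fun b => H.Adj u b)).card + (P3.filter (fun b => H.Adj v b)).card := by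
          rw [hfil, hfil]
      _ = ((P3.filter (fun b => H.Adj u b)) ∪ (P3.filter (fun b => H.Adj v b))).card :=
          (Finset.card_union_of_disjoint hdisj).symm
      _ ≤ c := Finset.card_le_card (Finset.union_subset (Finset.filter_subset _ _)
          (Finset.filter_subset _ _))
  set m : Fin n → ℕ := fun x => c - D3 x with hm
  have hmc : ∀ x, m x + D3 x = c := fun x => Nat.sub_add_cancel (hD3le x)
  -- sums of m over parts
  have hs1 : (∑ u ∈ P1, m u) + SB H P1 P3 = P1.card * c := by
    rw [SB, ← Finset.sum_add_distrib]
    calc (∑ u ∈ P1, (m u + D3 u)) = ∑ _u ∈ P1, c := Finset.sum_congr rfl (fun u _ => hmc u)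
    _ = P1.card * c := by rw [Finset.sum_const, smul_eq_mul]
  have hs2 : (∑ u ∈ P2, m u) + SB H P2 P3 = P2.card * c := by
    rw [SB, ← Finset.sum_add_distrib]
    calc (∑ u ∈ P2, (m u + D3 u)) = ∑ _u ∈ P2, c := Finset.sum_congr rfl (fun u _ => hmc u)
    _ = P2.card * c := by rw [Finset.sum_const, smul_eq_mul]
  -- the main estimate
  have step1 : SB H P1 P2 * c ≤ ∑ u ∈ P1, ∑ v ∈ P2, (if H.Adj u v then 1 else 0) * (m u + m v) := by
    rw [SB, Finset.sum_mul]
    apply Finset.sum_le_sum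
    intro u _
    rw [Finset.sum_mul]
    apply Finset.sum_le_sum
    intro v _
    by_cases h : H.Adj u v
    · rw [if_pos h, one_mul, one_mul]
      have h1 := hkey u v h
      have h2 := hmc u
      have h3 := hmc v
      omega
    · rw [if_neg h, zero_mul, zero_mul]
  have step2 : (∑ u ∈ P1, ∑ v ∈ P2, (if H.Adj u v then 1 else 0) * (m u + m v))
      ≤ c * (∑ u ∈ P1, m u) + c * (∑ v ∈ P2, m v) := by
    have hsplit : (∑ u ∈ P1, ∑ v ∈ P2, (if H.Adj u v then 1 else 0) * (m u + m v))
        = (∑ u ∈ P1, (∑ v ∈ P2, if H.Adj u v then 1 else 0) * m u)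
          + (∑ v ∈ P2, (∑ u ∈ P1, if H.Adj u v then 1 else 0) * m v) := by
      have : ∀ u ∈ P1, (∑ v ∈ P2, (if H.Adj u v then 1 else 0) * (m u + m v))
          = (∑ v ∈ P2, (if H.Adj u v then 1 else 0) * m u)
            + (∑ v ∈ P2, (if H.Adj u v then 1 else 0) * m v) := by
        intro u _
        rw [← Finset.sum_add_distrib]
        exact Finset.sum_congr rfl (fun v _ => by ring)
      rw [Finset.sum_congr rfl this, Finset.sum_add_distrib]
      congr 1
      · exact Finset.sum_congr rfl (fun u _ => by rw [Finset.sum_mul])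
      · rw [Finset.sum_comm]
        exact Finset.sum_congr rfl (fun v _ => by rw [Finset.sum_mul])
    rw [hsplit]
    have b1 : (∑ u ∈ P1, (∑ v ∈ P2, if H.Adj u v then 1 else 0) * m u)
        ≤ ∑ u ∈ P1, c * m u := by
      apply Finset.sum_le_sum
      intro u _
      apply Nat.mul_le_mul_right
      calc (∑ v ∈ P2, if H.Adj u v then 1 else 0) ≤ ∑ _v ∈ P2, 1 :=
            Finset.sum_le_sum (fun v _ => by split <;> omega)
      _ = P2.card := by simp
      _ ≤ c := h2
    have b2 : (∑ v ∈ P2, (∑ u ∈ P1, if H.Adj u v then 1 else 0) * m v)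
        ≤ ∑ v ∈ P2, c * m v := by
      apply Finset.sum_le_sum
      intro v _
      apply Nat.mul_le_mul_right
      calc (∑ u ∈ P1, if H.Adj u v then 1 else 0) ≤ ∑ _u ∈ P1, 1 :=
            Finset.sum_le_sum (fun u _ => by split <;> omega)
      _ = P1.card := by simp
      _ ≤ c := h1
    rw [Finset.mul_sum, Finset.mul_sum]
    omega
  -- combine
  by_cases hc0 : c = 0
  · have hP1 : P1 = ∅ := Finset.card_eq_zero.mp (by omega)
    have hP2 : P2 = ∅ := Finset.card_eq_zero.mp (by omega)
    simp [SB, hP1, hP2]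
  · have hmain : (SB H P1 P2 + SB H P1 P3 + SB H P2 P3) * c ≤ ((P1.card + P2.card) * c) * c := by
      have e1 : SB H P1 P2 * c ≤ c * (∑ u ∈ P1, m u) + c * (∑ v ∈ P2, m v) :=
        le_trans step1 step2
      have e2 : (SB H P1 P2 + SB H P1 P3 + SB H P2 P3) * c
          = SB H P1 P2 * c + c * SB H P1 P3 + c * SB H P2 P3 := by ring
      have e3 : c * (∑ u ∈ P1, m u) + c * SB H P1 P3 = c * (P1.card * c) := by
        rw [← Nat.mul_add, hs1]
      have e4 : c * (∑ v ∈ P2, m v) + c * SB H P2 P3 = c * (P2.card * c) := by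
        rw [← Nat.mul_add, hs2]
      have e5 : c * (P1.card * c) + c * (P2.card * c) = ((P1.card + P2.card) * c) * c := by ring
      omega
    exact Nat.le_of_mul_le_mul_right hmain (Nat.pos_of_ne_zero hc0)

/-- decomposition of AA over a tripartition -/
lemma AA_decomp (G : SimpleGraph (Fin n)) (P1 P2 P3 : Finset (Fin n))
    (hcov : ∀ a, a ∈ P1 ∨ a ∈ P2 ∨ a ∈ P3)
    (hd12 : Disjoint P1 P2) (hd13 : Disjoint P1 P3) (hd23 : Disjoint P2 P3)
    (hi1 : ∀ a ∈ P1, ∀ b ∈ P1, ¬ G.Adj a b) (hi2 : ∀ a ∈ P2, ∀ b ∈ P2, ¬ G.Adj a b)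
    (hi3 : ∀ a ∈ P3, ∀ b ∈ P3, ¬ G.Adj a b) :
    AA G = 2 * (SB G P1 P2 + SB G P1 P3 + SB G P2 P3) := by
  have huniv : (univ : Finset (Fin n)) = P1 ∪ (P2 ∪ P3) := by
    apply Finset.ext
    intro a
    simp only [mem_univ, Finset.mem_union, true_iff]
    exact hcov a
  have hd1 : Disjoint P1 (P2 ∪ P3) := Finset.disjoint_union_right.mpr ⟨hd12, hd13⟩
  have : AA G = SB G (P1 ∪ (P2 ∪ P3)) (P1 ∪ (P2 ∪ P3)) := by rw [AA, huniv]
  rw [this, SB_union_left G hd1, SB_union_left G hd23, SB_union_right G _ hd1,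
    SB_union_right G _ hd1, SB_union_right G _ hd1, SB_union_right G _ hd23,
    SB_union_right G _ hd23, SB_union_right G _ hd23]
  rw [SB_diag_zero hi1, SB_diag_zero hi2, SB_diag_zero hi3]
  rw [SB_comm G P2 P1, SB_comm G P3 P1, SB_comm G P3 P2]
  ring

lemma partition_bound (G H : SimpleGraph (Fin n))
    (hHG : ∀ ⦃x y⦄, H.Adj x y → G.Adj x y) (hH3 : H.CliqueFree 3)
    (P1 P2 P3 : Finset (Fin n))
    (hcov : ∀ a, a ∈ P1 ∨ a ∈ P2 ∨ a ∈ P3)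
    (hd12 : Disjoint P1 P2) (hd13 : Disjoint P1 P3) (hd23 : Disjoint P2 P3)
    (hi1 : ∀ a ∈ P1, ∀ b ∈ P1, ¬ G.Adj a b) (hi2 : ∀ a ∈ P2, ∀ b ∈ P2, ¬ G.Adj a b)
    (hi3 : ∀ a ∈ P3, ∀ b ∈ P3, ¬ G.Adj a b)
    (h13 : P1.card ≤ P3.card) (h23 : P2.card ≤ P3.card) :
    10 * (2 * AA G + AA H) ≤ 18 * n ^ 2 := by
  have hiH1 : ∀ a ∈ P1, ∀ b ∈ P1, ¬ H.Adj a b := fun a ha b hb h => hi1 a ha b hb (hHG h)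
  have hiH2 : ∀ a ∈ P2, ∀ b ∈ P2, ¬ H.Adj a b := fun a ha b hb h => hi2 a ha b hb (hHG h)
  have hiH3 : ∀ a ∈ P3, ∀ b ∈ P3, ¬ H.Adj a b := fun a ha b hb h => hi3 a ha b hb (hHG h)
  have hAG := AA_decomp G P1 P2 P3 hcov hd12 hd13 hd23 hi1 hi2 hi3
  have hAH := AA_decomp H P1 P2 P3 hcov hd12 hd13 hd23 hiH1 hiH2 hiH3
  have hbes := BES H hH3 P1 P2 P3 h13 h23
  have hb12 := SB_le G P1 P2
  have hb13 := SB_le G P1 P3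
  have hb23 := SB_le G P2 P3
  -- total size
  have hsize : P1.card + P2.card + P3.card = n := by
    have huniv : (univ : Finset (Fin n)) = P1 ∪ (P2 ∪ P3) := by
      apply Finset.ext
      intro a
      simp only [mem_univ, Finset.mem_union, true_iff]
      exact hcov a
    have hd1 : Disjoint P1 (P2 ∪ P3) := Finset.disjoint_union_right.mpr ⟨hd12, hd13⟩
    have : n = (P1 ∪ (P2 ∪ P3)).card := by
      rw [← huniv, Finset.card_univ, Fintype.card_fin]
    rw [Finset.card_union_of_disjoint hd1, Finset.card_union_of_disjoint hd23] at this
    omega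
  set a := P1.card
  set b := P2.card
  set c := P3.card
  have harith : 10 * (2 * (2 * (a * b + a * c + b * c)) + 2 * ((a + b) * c)) ≤ 18 * n ^ 2 := by
    have hcast : (40 * (a * b + a * c + b * c) + 20 * ((a + b) * c) : ℤ) ≤ 18 * ((a : ℤ) + b + c) ^ 2 := by
      nlinarith [sq_nonneg ((a : ℤ) - b), sq_nonneg (2 * (a : ℤ) + 2 * b - 3 * c)]
    have hn : ((a : ℤ) + b + c) = (n : ℤ) := by exact_mod_cast congrArg (Nat.cast : ℕ → ℤ) hsize
    rw [hn] at hcast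
    have : (10 * (2 * (2 * (a * b + a * c + b * c)) + 2 * ((a + b) * c)) : ℤ) ≤ 18 * (n : ℤ) ^ 2 := by
      linarith
    exact_mod_cast this
  have hG' : AA G ≤ 2 * (a * b + a * c + b * c) := by omega
  have hH' : AA H ≤ 2 * ((a + b) * c) := by omega
  omega

lemma improve (G H : SimpleGraph (Fin n)) (hHG : ∀ ⦃x y⦄, H.Adj x y → G.Adj x y)
    (hG4 : G.CliqueFree 4) (hH3 : H.CliqueFree 3) {u w v : Fin n}
    (huw : G.Adj u w) (huv : ¬ G.Adj u v) (hwv : ¬ G.Adj w v)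
    (hvu0 : v ≠ u) (hvw0 : v ≠ w) :
    ∃ G₂ H₂ : SimpleGraph (Fin n), (∀ ⦃x y⦄, H₂.Adj x y → G₂.Adj x y) ∧
      G₂.CliqueFree 4 ∧ H₂.CliqueFree 3 ∧
      2 * AA G + AA H + 2 ≤ 2 * AA G₂ + AA H₂ := by
  have hvu : ¬ G.Adj v u := fun h => huv h.symm
  have hvw : ¬ G.Adj w v := hwv
  rcases Nat.lt_trichotomy (gg G H u) (gg G H v) with hlt | heq | hgt
  · -- replace u by twin of v
    refine ⟨swapG G u v, swapG H u v, swapG_le hHG u v,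
      swapG_cliqueFree hG4 u v, swapG_cliqueFree hH3 u v, ?_⟩
    have := F_swap G H hHG huv
    omega
  · -- gg u = gg v ; compare with w
    rcases Nat.lt_trichotomy (gg G H w) (gg G H v) with hlt2 | heq2 | hgt2
    · -- replace w by twin of v
      refine ⟨swapG G w v, swapG H w v, swapG_le hHG w v,
        swapG_cliqueFree hG4 w v, swapG_cliqueFree hH3 w v, ?_⟩
      have := F_swap G H hHG hwv
      omega
    · -- all equal: double surgery
      have hwu : w ≠ u := (G.ne_of_adj huw).symm
      have hHG₁ : ∀ ⦃x y⦄, (swapG H u v).Adj x y → (swapG G u v).Adj x y := swapG_le hHG u v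
      have hF₁ := F_swap G H hHG huv
      have hG₁wv : ¬ (swapG G u v).Adj w v := by
        rw [swapG_adj_other G hwu hvu0]
        exact hwv
      have hF₂ := F_swap (swapG G u v) (swapG H u v) hHG₁ hG₁wv
      have hHwv : ¬ H.Adj w v := fun h => hwv (hHG h)
      have hHvu : ¬ H.Adj v u := fun h => huv (hHG h).symm
      have hdv : dA (swapG G u v) v = dA G v := by
        have h := dA_swap_other G (u := u) (v := v) hvu0
        rw [if_neg (fun h' : G.Adj v u => huv h'.symm), if_neg (G.loopless.irrefl v)] at h
        omega
      have hdvH : dA (swapG H u v) v = dA H v := by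
        have h := dA_swap_other H (u := u) (v := v) hvu0
        rw [if_neg hHvu, if_neg (H.loopless.irrefl v)] at h
        omega
      have hdw : dA (swapG G u v) w + 1 = dA G w := by
        have h := dA_swap_other G (u := u) (v := v) hwu
        rw [if_pos huw.symm, if_neg hwv] at h
        omega
      have hdwH : dA (swapG H u v) w ≤ dA H w := by
        have h := dA_swap_other H (u := u) (v := v) hwu
        rw [if_neg hHwv] at h
        split at h <;> omega
      refine ⟨swapG (swapG G u v) w v, swapG (swapG H u v) w v, swapG_le hHG₁ w v,
        swapG_cliqueFree (swapG_cliqueFree hG4 u v) w v,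
        swapG_cliqueFree (swapG_cliqueFree hH3 u v) w v, ?_⟩
      unfold gg at hF₁ hF₂ heq heq2
      omega
    · -- replace v by twin of w
      refine ⟨swapG G v w, swapG H v w, swapG_le hHG v w,
        swapG_cliqueFree hG4 v w, swapG_cliqueFree hH3 v w, ?_⟩
      have := F_swap G H hHG (show ¬ G.Adj v w from fun h => hwv h.symm)
      omega
  · -- replace v by twin of u
    refine ⟨swapG G v u, swapG H v u, swapG_le hHG v u,
      swapG_cliqueFree hG4 v u, swapG_cliqueFree hH3 v u, ?_⟩
    have := F_swap G H hHG hvu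
    omega

lemma key (G H : SimpleGraph (Fin n)) (hHG : ∀ ⦃x y⦄, H.Adj x y → G.Adj x y)
    (hG4 : G.CliqueFree 4) (hH3 : H.CliqueFree 3) :
    10 * (2 * AA G + AA H) ≤ 18 * n ^ 2 := by
  suffices h : ∀ k (G H : SimpleGraph (Fin n)), (∀ ⦃x y⦄, H.Adj x y → G.Adj x y) →
      G.CliqueFree 4 → H.CliqueFree 3 → 3 * n ^ 2 ≤ 2 * AA G + AA H + k →
      10 * (2 * AA G + AA H) ≤ 18 * n ^ 2 by
    have h1 := AA_le G
    have h2 := AA_le H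
    exact h (3 * n ^ 2) G H hHG hG4 hH3 (by omega)
  intro k
  induction k using Nat.strong_induction_on with
  | _ k IH =>
  intro G H hHG hG4 hH3 hk
  by_cases hbad : ∃ u w v, G.Adj u w ∧ ¬ G.Adj u v ∧ ¬ G.Adj w v ∧ v ≠ u ∧ v ≠ w
  · obtain ⟨u, w, v, huw, huv, hwv, hvu, hvw⟩ := hbad
    obtain ⟨G₂, H₂, hHG₂, hG₂4, hH₂3, hF⟩ := improve G H hHG hG4 hH3 huw huv hwv hvu hvw
    have hb2 : 2 * AA G₂ + AA H₂ ≤ 3 * n ^ 2 := by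
      have := AA_le G₂
      have := AA_le H₂
      omega
    have hklt : k - 2 < k := by omega
    have := IH (k - 2) hklt G₂ H₂ hHG₂ hG₂4 hH₂3 (by omega)
    omega
  · push_neg at hbad
    -- hbad : ∀ u w v, G.Adj u w → ¬G.Adj u v → ¬G.Adj w v → v ≠ u → v = w
    -- the non-adjacency "parts"
    set P : Fin n → Finset (Fin n) :=
      fun x0 => univ.filter (fun a => a = x0 ∨ ¬ G.Adj a x0) with hP
    have hmemP : ∀ x0 a, a ∈ P x0 ↔ (a = x0 ∨ ¬ G.Adj a x0) := by
      intro x0 a; simp [hP]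
    have hindep : ∀ x0, ∀ a ∈ P x0, ∀ b ∈ P x0, ¬ G.Adj a b := by
      intro x0 a ha b hb hadj
      rw [hmemP] at ha hb
      rcases ha with rfl | ha
      · rcases hb with rfl | hb
        · exact G.loopless.irrefl _ hadj
        · exact hb hadj.symm
      · rcases hb with rfl | hb
        · exact ha hadj
        · by_cases hx0a : x0 = a
          · exact hb (hx0a ▸ hadj.symm)
          · have h := hbad a b x0 hadj ha hb (fun he => hx0a he)
            exact ha (h ▸ hadj)
    have hdisjP : ∀ x0 y0, G.Adj x0 y0 → Disjoint (P x0) (P y0) := by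
      intro x0 y0 hxy
      rw [Finset.disjoint_left]
      intro a ha hb
      rw [hmemP] at ha hb
      rcases ha with rfl | ha
      · rcases hb with h | hb
        · exact G.loopless.irrefl _ (h ▸ hxy)
        · exact hb hxy
      · rcases hb with rfl | hb
        · exact ha hxy.symm
        · by_cases hax0 : a = x0
          · exact hb (hax0 ▸ hxy)
          · have h := hbad x0 y0 a hxy (fun h => ha h.symm) (fun h => hb h.symm)
              (fun he => hax0 he)
            exact ha (h.symm ▸ hxy.symm)
    by_cases htri : ∃ x y z, G.Adj x y ∧ G.Adj x z ∧ G.Adj y z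
    · obtain ⟨x, y, z, hxy, hxz, hyz⟩ := htri
      have hcov : ∀ a, a ∈ P x ∨ a ∈ P y ∨ a ∈ P z := by
        intro a
        by_contra hcon
        push_neg at hcon
        obtain ⟨hax, hay, haz⟩ := hcon
        rw [hmemP] at hax hay haz
        push_neg at hax hay haz
        have h3 : G.IsNClique 3 {x, y, z} :=
          SimpleGraph.is3Clique_triple_iff.mpr ⟨hxy, hxz, hyz⟩
        have h4 : G.IsNClique 4 (insert a {x, y, z}) := by
          apply h3.insert
          intro b hb
          simp only [Finset.mem_insert, Finset.mem_singleton] at hb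
          rcases hb with rfl | rfl | rfl
          · exact hax.2
          · exact hay.2
          · exact haz.2
        exact hG4 _ h4
      have hdxy := hdisjP x y hxy
      have hdxz := hdisjP x z hxz
      have hdyz := hdisjP y z hyz
      have hix := hindep x
      have hiy := hindep y
      have hiz := hindep z
      rcases le_total (P x).card (P z).card with hxz' | hxz'
      · rcases le_total (P y).card (P z).card with hyz' | hyz'
        · exact partition_bound G H hHG hH3 (P x) (P y) (P z) hcov hdxy hdxz hdyz
            hix hiy hiz hxz' hyz'
        · -- P y largest
          exact partition_bound G H hHG hH3 (P x) (P z) (P y)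
            (fun a => by rcases hcov a with h | h | h <;> tauto)
            hdxz hdxy hdyz.symm hix hiz hiy (le_trans hxz' hyz') hyz'
      · rcases le_total (P y).card (P x).card with hyx' | hyx'
        · -- P x largest
          exact partition_bound G H hHG hH3 (P y) (P z) (P x)
            (fun a => by rcases hcov a with h | h | h <;> tauto)
            hdyz hdxy.symm hdxz.symm hiy hiz hix hyx' hxz'
        · -- P y largest
          exact partition_bound G H hHG hH3 (P x) (P z) (P y)
            (fun a => by rcases hcov a with h | h | h <;> tauto)
            hdxz hdxy hdyz.symm hix hiz hiy hyx' (le_trans hxz' hyx')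
    · push_neg at htri
      by_cases hedge : ∃ x y, G.Adj x y
      · obtain ⟨x, y, hxy⟩ := hedge
        have hcov : ∀ a, a ∈ (∅ : Finset (Fin n)) ∨ a ∈ P x ∨ a ∈ P y := by
          intro a
          by_contra hcon
          push_neg at hcon
          obtain ⟨-, hax, hay⟩ := hcon
          rw [hmemP] at hax hay
          push_neg at hax hay
          exact htri a x y hax.2 hay.2 hxy
        have hdxy := hdisjP x y hxy
        have hie : ∀ a ∈ (∅ : Finset (Fin n)), ∀ b ∈ (∅ : Finset (Fin n)), ¬ G.Adj a b := by
          simp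
        rcases le_total (P x).card (P y).card with hc | hc
        · exact partition_bound G H hHG hH3 ∅ (P x) (P y)
            hcov (Finset.disjoint_empty_left _) (Finset.disjoint_empty_left _) hdxy
            hie (hindep x) (hindep y) (by simp) hc
        · exact partition_bound G H hHG hH3 ∅ (P y) (P x)
            (fun a => by rcases hcov a with h | h | h <;> tauto)
            (Finset.disjoint_empty_left _) (Finset.disjoint_empty_left _) hdxy.symm
            hie (hindep y) (hindep x) (by simp) hc
      · push_neg at hedge
        have hAG : AA G = 0 := by
          unfold AA SB
          apply Finset.sum_eq_zero
          intro xx _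
          apply Finset.sum_eq_zero
          intro yy _
          exact if_neg (hedge xx yy)
        have hAH : AA H = 0 := by
          unfold AA SB
          apply Finset.sum_eq_zero
          intro xx _
          apply Finset.sum_eq_zero
          intro yy _
          exact if_neg (fun h => hedge xx yy (hHG h))
        rw [hAG, hAH]
        simp

lemma AA_eq_twice_edges (G : SimpleGraph (Fin n)) : AA G = 2 * G.edgeFinset.card := by
  have h : ∀ x, dA G x = G.degree x := by
    intro x
    rw [SimpleGraph.degree, SimpleGraph.neighborFinset_eq_filter, Finset.card_filter]
    rfl
  rw [AA_eq_sum_dA]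
  rw [Finset.sum_congr rfl (fun x _ => h x)]
  exact SimpleGraph.sum_degrees_eq_twice_card_edges G

end WT

attribute [local instance] Classical.propDecidable


theorem weighted_turan_K4_free_no_heavy_23 :
    ∀ ε : ℝ, 0 < ε → ∃ n₀ : ℕ, ∀ n : ℕ, n₀ ≤ n →
      ∀ G : SimpleGraph (Fin n), G.CliqueFree 4 →
        ∀ w : Sym2 (Fin n) → ℝ,
          (∀ e ∈ edgeFinset' G, 0 ≤ w e ∧ w e ≤ 1) →
          (¬ ∃ x y z : Fin n, G.Adj x y ∧ G.Adj x z ∧ G.Adj y z ∧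
            2 / 3 < w s(x, y) ∧ 2 / 3 < w s(x, z) ∧ 2 / 3 < w s(y, z)) →
          ∑ e ∈ edgeFinset' G, w e ≤ (3 / 10 + ε) * n ^ 2 := by
  intro ε hε
  refine ⟨0, ?_⟩
  intro n _ G hG4 w hw hno
  -- the heavy graph
  set HH : SimpleGraph (Fin n) :=
    { Adj := fun x y => G.Adj x y ∧ 2 / 3 < w s(x, y)
      symm := by
        constructor
        rintro x y ⟨h1, h2⟩
        refine ⟨h1.symm, ?_⟩
        rwa [Sym2.eq_swap]
      loopless := ⟨fun x h => G.loopless.irrefl x h.1⟩ } with hHH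
  have hHG : ∀ ⦃x y⦄, HH.Adj x y → G.Adj x y := fun x y h => h.1
  have hH3 : HH.CliqueFree 3 := by
    intro S hS
    rw [SimpleGraph.is3Clique_iff] at hS
    obtain ⟨a, b, c, hab, hac, hbc, rfl⟩ := hS
    exact hno ⟨a, b, c, hab.1, hac.1, hbc.1, hab.2, hac.2, hbc.2⟩
  have hkey := WT.key G HH hHG hG4 hH3
  -- identify the edge finsets
  have hEF : edgeFinset' G = G.edgeFinset := by
    unfold edgeFinset'
    congr 1
  rw [hEF] at hw ⊢
  have hfilt : ∀ inst : Fintype HH.edgeSet,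
      (@SimpleGraph.edgeFinset _ HH inst).card = (G.edgeFinset.filter (fun e => 2 / 3 < w e)).card := by
    intro inst
    congr 1
    apply Finset.ext
    intro e
    induction e using Sym2.ind with
    | _ x y =>
      simp only [SimpleGraph.mem_edgeFinset, Finset.mem_filter, SimpleGraph.mem_edgeSet]
      exact Iff.rfl
  -- cardinalities
  set a := G.edgeFinset.card with ha
  set b := (G.edgeFinset.filter (fun e => 2 / 3 < w e)).card with hb
  set c := (G.edgeFinset.filter (fun e => ¬ 2 / 3 < w e)).card with hc
  have hbc : b + c = a := Finset.card_filter_add_card_filter_not _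
  have hAAG : WT.AA G = 2 * a := WT.AA_eq_twice_edges G
  have hAAH : WT.AA HH = 2 * b := by rw [WT.AA_eq_twice_edges HH, hfilt, hb]
  rw [hAAG, hAAH] at hkey
  have hnat : 40 * a + 20 * b ≤ 18 * n ^ 2 := by omega
  -- bound the sum
  have hsum : ∑ e ∈ G.edgeFinset, w e
      ≤ ∑ e ∈ G.edgeFinset, (if 2 / 3 < w e then (1 : ℝ) else 2 / 3) := by
    apply Finset.sum_le_sum
    intro e he
    by_cases h : 2 / 3 < w e
    · rw [if_pos h]; exact (hw e he).2
    · rw [if_neg h]; exact le_of_not_gt h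
  have hsplit : ∑ e ∈ G.edgeFinset, (if 2 / 3 < w e then (1 : ℝ) else 2 / 3)
      = b * 1 + c * (2 / 3) := by
    rw [Finset.sum_ite, Finset.sum_const, Finset.sum_const, nsmul_eq_mul, nsmul_eq_mul]
  have hcast : 40 * (a : ℝ) + 20 * (b : ℝ) ≤ 18 * (n : ℝ) ^ 2 := by exact_mod_cast hnat
  have hbc' : (b : ℝ) + (c : ℝ) = (a : ℝ) := by exact_mod_cast hbc
  have hεn : 0 ≤ ε * (n : ℝ) ^ 2 := mul_nonneg hε.le (sq_nonneg _)
  calc ∑ e ∈ G.edgeFinset, w e ≤ b * 1 + c * (2 / 3) := by rw [← hsplit]; exact hsum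
  _ ≤ (3 / 10 + ε) * (n : ℝ) ^ 2 := by nlinarith
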